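/- arXiv:2603.27166 — 2 statements merged into one kernel-verified Lean document; each statement's English description precedes it below -/
import Mathlib

section
/- Let R be a commutative noetherian ring, ℰ a thick subcategory of D^pf(R), and π : D^b(R) → D^b(R)/ℰ the Verdier quotient functor. Define ℰ̃ = {T ∈ D^b(R) : Hom_{D^b(R)/ℰ}(πT, πP) = 0 for all perfect P}. Then ℰ̃ is a thick subcategory of D^b(R) containing ℰ, and ℰ̃ ∩ D^pf(R) = ℰ. -/
open CategoryTheory Limits Pretriangulated ZeroObject

noncomputable section

namespace ProxyPaper

/-- We fix, once and for all, a derived category structure on `ModuleCat R`. -/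
instance hasDC (R : Type) [CommRing R] : HasDerivedCategory (ModuleCat.{0} R) :=
  HasDerivedCategory.standard _

/-- The (unbounded) derived category of `R`-modules. The bounded derived category `D^b(R)`
of finitely generated modules is identified with the full subcategory of objects with
bounded, finitely generated cohomology (see `IsDb`). -/
abbrev D (R : Type) [CommRing R] := DerivedCategory (ModuleCat.{0} R)

variable {R : Type} [CommRing R]

/-- The `i`-th cohomology module of an object of the derived category. -/
abbrev hmod (X : D R) (i : ℤ) : ModuleCat R :=
  (DerivedCategory.homologyFunctor (ModuleCat.{0} R) i).obj X

/-- The object of the derived category given by a module placed in degree `0`. -/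
abbrev sing (M : ModuleCat.{0} R) : D R :=
  (DerivedCategory.singleFunctor (ModuleCat.{0} R) 0).obj M

/-- Membership in `D^b(R)`: bounded cohomology, all cohomology modules finitely generated. -/
def IsDb (X : D R) : Prop :=
  (∃ a b : ℤ, ∀ i : ℤ, (i < a ∨ b < i) → IsZero (hmod X i)) ∧
    ∀ i : ℤ, Module.Finite R (hmod X i)

/-- A set of objects is a triangulated subcategory: contains `0`, closed under isomorphism,
shifts, and extensions. -/
def IsTriangulatedSet (S : Set (D R)) : Prop :=
  (0 : D R) ∈ S ∧
  (∀ ⦃X Y : D R⦄, (X ≅ Y) → X ∈ S → Y ∈ S) ∧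
  (∀ X : D R, ∀ n : ℤ, X ∈ S → X⟦n⟧ ∈ S) ∧
  (∀ T : Triangle (D R), (T ∈ distTriang (D R)) → T.obj₁ ∈ S → T.obj₃ ∈ S → T.obj₂ ∈ S)

/-- A thick subcategory: a triangulated subcategory closed under direct summands
(equivalently, retracts). -/
def IsThickSet (S : Set (D R)) : Prop :=
  IsTriangulatedSet S ∧
  ∀ ⦃X Y : D R⦄ (s : Y ⟶ X) (r : X ⟶ Y), s ≫ r = 𝟙 Y → X ∈ S → Y ∈ S

/-- The thick closure of a set of objects. -/
def thickClosure (S : Set (D R)) : Set (D R) :=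
  {X | ∀ T : Set (D R), IsThickSet T → S ⊆ T → X ∈ T}

/-- The perfect complexes: the thick closure of `R`. -/
def Perf (R : Type) [CommRing R] : Set (D R) :=
  thickClosure {sing (ModuleCat.of R R)}

/-- The support of an object of `D^b(R)`: the union of the supports of its cohomology
modules; for bounded complexes this coincides with `{p | X_p ≠ 0}`. -/
def supp (X : D R) : Set (PrimeSpectrum R) :=
  ⋃ i : ℤ, Module.support R (hmod X i)

/-- The support of a subcategory. -/
def suppSet (S : Set (D R)) : Set (PrimeSpectrum R) :=
  ⋃ X ∈ S, supp X

/-- A thick subcategory `S` of `D^b(R)` is proxy small if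
`Supp S = Supp (S ∩ D^pf(R))`. -/
def IsProxySmall (S : Set (D R)) : Prop :=
  suppSet S = suppSet (S ∩ Perf R)

/-- `X` localized at `p` is a perfect complex over `R_p`: equivalently (for `X ∈ D^b(R)`,
`R` noetherian), there is a perfect complex `P` over `R` and a morphism `P ⟶ X` whose
cone is supported away from `p`. -/
def PerfAt (X : D R) (p : PrimeSpectrum R) : Prop :=
  ∃ (P Z : D R) (f : P ⟶ X) (g : X ⟶ Z) (h : Z ⟶ P⟦(1 : ℤ)⟧),
    P ∈ Perf R ∧ (Triangle.mk f g h ∈ distTriang (D R)) ∧ p ∉ supp Z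

/-- The infinite projective dimension locus of an object:
primes `p` such that `X_p ∉ D^pf(R_p)`. -/
def ipd (X : D R) : Set (PrimeSpectrum R) :=
  {p | ¬ PerfAt X p}

/-- The infinite projective dimension locus of a subcategory. -/
def ipdSet (S : Set (D R)) : Set (PrimeSpectrum R) :=
  ⋃ X ∈ S, ipd X

/-- A noetherian local ring, with maximal ideal generated by a regular sequence,
i.e. a regular local ring. -/
def IsRegularLocalRing (A : Type) [CommRing A] : Prop :=
  IsNoetherianRing A ∧
    ∃ rs : List A, RingTheory.Sequence.IsRegular A rs ∧
      (Ideal.span {x | x ∈ rs}).IsMaximal ∧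
      ∀ I : Ideal A, I.IsMaximal → I = Ideal.span {x | x ∈ rs}

/-- The singular locus of `R`. -/
def SingLocus (R : Type) [CommRing R] : Set (PrimeSpectrum R) :=
  {p | ¬ IsRegularLocalRing (Localization.AtPrime p.asIdeal)}

/-- A local ring is a complete intersection if its completion is the quotient of a
regular local ring by an ideal generated by a regular sequence. -/
def IsCompleteIntersection (A : Type) [CommRing A] [IsLocalRing A] : Prop :=
  ∃ (Q : Type) (_ : CommRing Q), IsRegularLocalRing Q ∧
    ∃ f : Q →+* AdicCompletion (IsLocalRing.maximalIdeal A) A,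
      Function.Surjective f ∧
        ∃ rs : List Q, RingTheory.Sequence.IsRegular Q rs ∧
          RingHom.ker f = Ideal.span {x | x ∈ rs}

/-- A local ring is a hypersurface if its completion is the quotient of a
regular local ring by a single element. -/
def IsHypersurface (A : Type) [CommRing A] [IsLocalRing A] : Prop :=
  ∃ (Q : Type) (_ : CommRing Q), IsRegularLocalRing Q ∧
    ∃ f : Q →+* AdicCompletion (IsLocalRing.maximalIdeal A) A,
      Function.Surjective f ∧ ∃ x : Q, RingHom.ker f = Ideal.span {x}

/-- A local ring `A` is dominant if, for every object `X` of `D^b(A)` which is not perfect,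
the residue field of `A` belongs to `thick (A ⊕ X)`, i.e. the thick closure of `{A, X}`. -/
def IsDominant (A : Type) [CommRing A] [IsLocalRing A] : Prop :=
  ∀ X : D A, IsDb X → X ∉ Perf A →
    sing (ModuleCat.of A (IsLocalRing.ResidueField A)) ∈
      thickClosure {sing (ModuleCat.of A A), X}

/-- `R` is locally dominant if all its localizations at primes are dominant local rings. -/
def IsLocallyDominant (R : Type) [CommRing R] : Prop :=
  ∀ p : PrimeSpectrum R, IsDominant (Localization.AtPrime p.asIdeal)

/-- An object `X` of `D^b(R)` has finite injective dimension: `Ext^i(M, X) = 0` for all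
finitely generated modules `M` and all large enough `i`. -/
def FiniteInjDim (X : D R) : Prop :=
  ∃ n : ℤ, ∀ M : ModuleCat.{0} R, Module.Finite R M →
    ∀ i : ℤ, n < i → Subsingleton (sing M ⟶ X⟦i⟧)

/-- An object `X` of `D^b(R)` has finite projective dimension: `Ext^i(X, M) = 0` for all
finitely generated modules `M` and all large enough `i`. -/
def FiniteProjDim (X : D R) : Prop :=
  ∃ n : ℤ, ∀ M : ModuleCat.{0} R, Module.Finite R M →
    ∀ i : ℤ, n < i → Subsingleton (X ⟶ (sing M)⟦i⟧)

/-- A noetherian local ring is Gorenstein if `R` has finite injective dimension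
as a module over itself. -/
def IsGorenstein (A : Type) [CommRing A] : Prop :=
  IsLocalRing A ∧ IsNoetherianRing A ∧ FiniteInjDim (sing (ModuleCat.of A A))

/-- The class of morphisms of the derived category whose cone lies in `E`; the Verdier
quotient by `E` is the localization at this class. -/
def coneW {R : Type} [CommRing R] (E : Set (D R)) : MorphismProperty (D R) :=
  fun X Y f => ∃ (Z : D R) (g : Y ⟶ Z) (h : Z ⟶ X⟦(1 : ℤ)⟧),
    (Triangle.mk f g h ∈ distTriang (D R)) ∧ Z ∈ E

/-- Vanishing of `Hom(πT, πP)` in the Verdier quotient by `E` (realized as the localization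
of the derived category at morphisms with cone in `E`; for `T, P ∈ D^b(R)` this computes
the Hom group in `D^b(R)/E`). -/
def homVanish {R : Type} [CommRing R] (E : Set (D R)) (T P : D R) : Prop :=
  Subsingleton ((coneW E).Q.obj T ⟶ (coneW E).Q.obj P)

/-- `Ẽ`: the objects `T` of `D^b(R)` with `Hom_{D^b(R)/E}(πT, πP) = 0` for all perfect `P`. -/
def tildeE {R : Type} [CommRing R] (E : Set (D R)) : Set (D R) :=
  {T | IsDb T ∧ ∀ P ∈ Perf R, homVanish E T P}

section Stmt12Aux

open CategoryTheory.Triangulated DerivedCategory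

variable {R : Type} [CommRing R]

lemma subsingleton_hom_of_iso {C : Type*} [Category C] {A A' B B' : C}
    (e : A' ≅ A) (e' : B ≅ B') (h : Subsingleton (A ⟶ B)) : Subsingleton (A' ⟶ B') := by
  constructor
  intro f g
  have hfg : e.inv ≫ f ≫ e'.inv = e.inv ≫ g ≫ e'.inv := h.elim _ _
  calc f = e.hom ≫ (e.inv ≫ f ≫ e'.inv) ≫ e'.hom := by simp
    _ = e.hom ≫ (e.inv ≫ g ≫ e'.inv) ≫ e'.hom := by rw [hfg]
    _ = g := by simp

lemma subsingletonOfIsZero {M : ModuleCat.{0} R} (h : IsZero M) : Subsingleton M :=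
  Equiv.subsingleton
    ((h.iso (ModuleCat.isZero_of_subsingleton (ModuleCat.of R PUnit))).toLinearEquiv.toEquiv)

lemma finOfIsZero {M : ModuleCat.{0} R} (h : IsZero M) : Module.Finite R M := by
  have := subsingletonOfIsZero h
  refine ⟨⟨{0}, Submodule.eq_top_iff'.2 fun x => ?_⟩⟩
  rw [Subsingleton.elim x 0]
  exact Submodule.zero_mem _

lemma finite_of_exact [IsNoetherianRing R] (S : ShortComplex (ModuleCat.{0} R))
    (hS : S.Exact) (h1 : Module.Finite R S.X₁) (h3 : Module.Finite R S.X₃) :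
    Module.Finite R S.X₂ := by
  have hker : LinearMap.range S.f.hom = LinearMap.ker S.g.hom := hS.moduleCat_range_eq_ker
  have : IsNoetherian R S.X₃ := isNoetherian_of_isNoetherianRing_of_finite R S.X₃
  refine ⟨Submodule.fg_of_fg_map_of_fg_inf_ker S.g.hom ?_ ?_⟩
  · exact IsNoetherian.noetherian _
  · rw [top_inf_eq, ← hker, ← Submodule.map_top]
    exact h1.fg_top.map _

lemma isZero_of_exact (S : ShortComplex (ModuleCat.{0} R)) (hS : S.Exact)
    (h1 : IsZero S.X₁) (h3 : IsZero S.X₃) : IsZero S.X₂ := by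
  have h1' := subsingletonOfIsZero h1
  have h3' := subsingletonOfIsZero h3
  have : Subsingleton S.X₂ := by
    constructor
    intro x y
    suffices h : ∀ z : S.X₂, z = 0 by rw [h x, h y]
    intro z
    have hz : S.g z = 0 := Subsingleton.elim _ _
    obtain ⟨w, hw⟩ := (S.moduleCat_exact_iff.1 hS) z hz
    rw [← hw, Subsingleton.elim w 0, map_zero]
  exact ModuleCat.isZero_of_subsingleton _

/-- The compatibility of homology with shift. -/
noncomputable def hmodShift (X : D R) (n i : ℤ) : hmod (X⟦n⟧) i ≅ hmod X (n + i) :=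
  ((DerivedCategory.homologyFunctor (ModuleCat.{0} R) 0).shiftIso n i (n + i) rfl).app X

lemma isDb_zero : IsDb (0 : D R) := by
  have hz : ∀ i : ℤ, IsZero (hmod (0 : D R) i) := by
    intro i
    rw [IsZero.iff_id_eq_zero]
    calc 𝟙 (hmod (0 : D R) i)
        = (DerivedCategory.homologyFunctor (ModuleCat.{0} R) i).map (𝟙 (0 : D R)) :=
          (CategoryTheory.Functor.map_id _ _).symm
      _ = (DerivedCategory.homologyFunctor (ModuleCat.{0} R) i).map 0 := by rw [id_zero]
      _ = 0 := Functor.map_zero _ _ _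
  exact ⟨⟨0, 0, fun i _ => hz i⟩, fun i => finOfIsZero (hz i)⟩

lemma isDb_of_iso {X Y : D R} (e : X ≅ Y) (h : IsDb X) : IsDb Y := by
  obtain ⟨⟨a, b, hb⟩, hf⟩ := h
  have eIso : ∀ i : ℤ, hmod X i ≅ hmod Y i :=
    fun i => (DerivedCategory.homologyFunctor _ i).mapIso e
  refine ⟨⟨a, b, fun i hi => (hb i hi).of_iso (eIso i).symm⟩, fun i => ?_⟩
  have := hf i
  exact Module.Finite.equiv (eIso i).toLinearEquiv

lemma isDb_shift (X : D R) (n : ℤ) (h : IsDb X) : IsDb (X⟦n⟧) := by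
  obtain ⟨⟨a, b, hb⟩, hf⟩ := h
  refine ⟨⟨a - n, b - n, fun i hi => ?_⟩, fun i => ?_⟩
  · exact (hb (n + i) (by omega)).of_iso (hmodShift X n i)
  · have := hf (n + i)
    exact Module.Finite.equiv (hmodShift X n i).toLinearEquiv.symm

lemma isDb_ext [IsNoetherianRing R] (T : Triangle (D R)) (hT : T ∈ distTriang (D R))
    (h1 : IsDb T.obj₁) (h3 : IsDb T.obj₃) : IsDb T.obj₂ := by
  obtain ⟨⟨a1, b1, hb1⟩, hf1⟩ := h1
  obtain ⟨⟨a3, b3, hb3⟩, hf3⟩ := h3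
  refine ⟨⟨min a1 a3, max b1 b3, fun i hi => ?_⟩, fun i => ?_⟩
  · exact isZero_of_exact _ (DerivedCategory.HomologySequence.exact₂ T hT i)
      (hb1 i (by omega)) (hb3 i (by omega))
  · exact finite_of_exact _ (DerivedCategory.HomologySequence.exact₂ T hT i) (hf1 i) (hf3 i)

lemma isDb_retract {X Y : D R} (s : Y ⟶ X) (r : X ⟶ Y) (hsr : s ≫ r = 𝟙 Y)
    (h : IsDb X) : IsDb Y := by
  obtain ⟨⟨a, b, hb⟩, hf⟩ := h
  have hcomp : ∀ i : ℤ, (DerivedCategory.homologyFunctor (ModuleCat.{0} R) i).map s ≫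
      (DerivedCategory.homologyFunctor (ModuleCat.{0} R) i).map r = 𝟙 _ := fun i => by
    rw [← CategoryTheory.Functor.map_comp, hsr, CategoryTheory.Functor.map_id]
  refine ⟨⟨a, b, fun i hi => ?_⟩, fun i => ?_⟩
  · rw [IsZero.iff_id_eq_zero, ← hcomp i,
      (hb i hi).eq_of_tgt ((DerivedCategory.homologyFunctor _ i).map s) 0, zero_comp]
  · have := hf i
    refine Module.Finite.of_surjective
      (((DerivedCategory.homologyFunctor (ModuleCat.{0} R) i).map r).hom :
        hmod X i →ₗ[R] hmod Y i) (fun y => ⟨(DerivedCategory.homologyFunctor _ i).map s y, ?_⟩)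
    have := congrArg (fun (φ : hmod Y i ⟶ hmod Y i) => φ y) (hcomp i)
    simpa using this

lemma isDb_thick [IsNoetherianRing R] : IsThickSet {X : D R | IsDb X} :=
  ⟨⟨isDb_zero, fun _ _ e h => isDb_of_iso e h, fun X n h => isDb_shift X n h,
    fun T hT h1 h3 => isDb_ext T hT h1 h3⟩,
   fun _ _ s r h hX => isDb_retract s r h hX⟩

lemma thickClosure_thick (S : Set (D R)) : IsThickSet (thickClosure S) :=
  ⟨⟨fun T hT _ => hT.1.1,
    fun _ _ e hX T hT hS => hT.1.2.1 e (hX T hT hS),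
    fun X n hX T hT hS => hT.1.2.2.1 X n (hX T hT hS),
    fun Tr hTr hh1 hh3 T hT hS => hT.1.2.2.2 Tr hTr (hh1 T hT hS) (hh3 T hT hS)⟩,
   fun _ _ s r hsr hX T hT hS => hT.2 s r hsr (hX T hT hS)⟩

lemma subset_thickClosure (S : Set (D R)) : S ⊆ thickClosure S :=
  fun _ hX T _ hS => hS hX

lemma thickClosure_subset {S T : Set (D R)} (hT : IsThickSet T) (h : S ⊆ T) :
    thickClosure S ⊆ T := fun _ hX => hX T hT h

lemma isDb_sing (M : ModuleCat.{0} R) [Module.Finite R M] : IsDb (sing M) := by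
  have e0 : sing M ≅ DerivedCategory.Q.obj
      ((HomologicalComplex.single (ModuleCat.{0} R) (ComplexShape.up ℤ) 0).obj M) :=
    ((SingleFunctors.evaluation _ _ 0).mapIso
      (DerivedCategory.singleFunctorsPostcompQIso (ModuleCat.{0} R))).app M
  have e1 : ∀ i : ℤ, hmod (sing M) i ≅
      ((HomologicalComplex.single (ModuleCat.{0} R) (ComplexShape.up ℤ) 0).obj M).homology i :=
    fun i => (DerivedCategory.homologyFunctor _ i).mapIso e0 ≪≫
      (DerivedCategory.homologyFunctorFactors (ModuleCat.{0} R) i).app _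
  refine ⟨⟨0, 0, fun i hi => ?_⟩, fun i => ?_⟩
  · have hi' : i ≠ 0 := by omega
    exact (HomologicalComplex.isZero_single_obj_homology _ 0 M i hi').of_iso (e1 i)
  · by_cases hi : i = 0
    · subst hi
      have e2 : hmod (sing M) 0 ≅ M := e1 0 ≪≫
        (HomologicalComplex.homologyFunctorSingleIso (ModuleCat.{0} R)
          (ComplexShape.up ℤ) 0).app M
      exact Module.Finite.equiv e2.symm.toLinearEquiv
    · exact finOfIsZero
        ((HomologicalComplex.isZero_single_obj_homology _ 0 M i hi).of_iso (e1 i))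

lemma perf_isDb [IsNoetherianRing R] {X : D R} (h : X ∈ Perf R) : IsDb X :=
  thickClosure_subset isDb_thick
    (by rintro Y rfl; exact @isDb_sing R _ (ModuleCat.of R R) (inferInstanceAs (Module.Finite R R))) h

/-- The triangulated subcategory associated to a thick set. -/
@[nolint unusedArguments]
def subcat (E : Set (D R)) (_hE : IsThickSet E) : ObjectProperty (D R) := fun X => X ∈ E

instance subcatIsTriangulated (E : Set (D R)) (hE : IsThickSet E) :
    (subcat E hE).IsTriangulated where
  exists_zero := ⟨0, isZero_zero _, hE.1.1⟩
  isStableUnderShiftBy n := ⟨fun X h => hE.1.2.2.1 X n h⟩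
  ext₂' T hT h1 h3 := ObjectProperty.le_isoClosure _ _ (hE.1.2.2.2 T hT h1 h3)

lemma coneW_eq (E : Set (D R)) (hE : IsThickSet E) : coneW E = (subcat E hE).trW := by
  ext X Y f
  constructor
  · rintro ⟨Z, g, h, hdist, hZ⟩
    exact ⟨Z, g, h, hdist, hZ⟩
  · rintro ⟨Z, g, h, hdist, hZ⟩
    exact ⟨Z, g, h, hdist, hZ⟩

lemma isZero_Q_obj_of_mem (E : Set (D R)) (hE : IsThickSet E) {P : D R} (hP : P ∈ E) :
    IsZero ((subcat E hE).trW.Q.obj P) := by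
  have hw : (subcat E hE).trW ((contractibleTriangle P).mor₂) :=
    ObjectProperty.trW.mk _ (rot_of_distTriang _ (contractible_distinguished P))
      (hE.1.2.2.1 P 1 hP)
  have hiso : IsIso ((subcat E hE).trW.Q.map ((contractibleTriangle P).mor₂)) :=
    Localization.inverts _ (subcat E hE).trW _ hw
  have e : (subcat E hE).trW.Q.obj P ≅ (subcat E hE).trW.Q.obj 0 :=
    @asIso _ _ _ _ ((subcat E hE).trW.Q.map ((contractibleTriangle P).mor₂)) hiso
  exact (CategoryTheory.Functor.map_isZero _ (isZero_zero (D R))).of_iso e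

end Stmt12Aux

/-- For a thick subcategory `ℰ` of `D^pf(R)`, the subcategory
`ℰ̃ = {T ∈ D^b(R) : Hom_{D^b(R)/ℰ}(πT, πP) = 0 for all perfect P}` is a thick subcategory
of `D^b(R)` containing `ℰ`, and `ℰ̃ ∩ D^pf(R) = ℰ`. -/
theorem stmt12 (R : Type) [CommRing R] [IsNoetherianRing R]
    (E : Set (D R)) (hE : IsThickSet E) (hEp : E ⊆ Perf R) :
    IsThickSet (tildeE E) ∧ E ⊆ tildeE E ∧ tildeE E ∩ Perf R = E := by
  have hvan : ∀ T P : D R, homVanish E T P ↔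
      Subsingleton ((subcat E hE).trW.Q.obj T ⟶ (subcat E hE).trW.Q.obj P) := by
    intro T P
    unfold homVanish
    rw [coneW_eq E hE]
  have hperfShift : ∀ (P : D R) (n : ℤ), P ∈ Perf R → P⟦n⟧ ∈ Perf R :=
    fun P n hP => (thickClosure_thick _).1.2.2.1 P n hP
  have hsub : E ⊆ tildeE E := by
    intro T hT
    refine ⟨perf_isDb (hEp hT), fun P hP => (hvan T P).2 ?_⟩
    exact ⟨fun f g => (isZero_Q_obj_of_mem E hE hT).eq_of_src f g⟩
  refine ⟨⟨⟨hsub hE.1.1, ?_, ?_, ?_⟩, ?_⟩, hsub, ?_⟩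
  · -- iso closure
    intro X Y e hX
    refine ⟨isDb_of_iso e hX.1, fun P hP => (hvan Y P).2 ?_⟩
    exact subsingleton_hom_of_iso ((subcat E hE).trW.Q.mapIso e).symm (Iso.refl _)
      ((hvan X P).1 (hX.2 P hP))
  · -- shift closure
    intro X n hX
    refine ⟨isDb_shift X n hX.1, fun P hP => (hvan _ P).2 ?_⟩
    have h1 : Subsingleton ((subcat E hE).trW.Q.obj X ⟶
        (subcat E hE).trW.Q.obj (P⟦(-n : ℤ)⟧)) :=
      (hvan X _).1 (hX.2 (P⟦(-n : ℤ)⟧) (hperfShift P (-n) hP))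
    have h2 : Subsingleton ((subcat E hE).trW.Q.obj X ⟶
        ((subcat E hE).trW.Q.obj P)⟦(-n : ℤ)⟧) :=
      subsingleton_hom_of_iso (Iso.refl _) (((subcat E hE).trW.Q.commShiftIso (-n)).app P) h1
    have h2' : Subsingleton ((subcat E hE).trW.Q.obj X ⟶
        (shiftEquiv ((subcat E hE).trW.Localization) n).inverse.obj ((subcat E hE).trW.Q.obj P)) :=
      h2
    have h3 : Subsingleton (((subcat E hE).trW.Q.obj X)⟦n⟧ ⟶ (subcat E hE).trW.Q.obj P) :=
      Equiv.subsingleton ((shiftEquiv ((subcat E hE).trW.Localization) n).toAdjunction.homEquiv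
        ((subcat E hE).trW.Q.obj X) ((subcat E hE).trW.Q.obj P))
    exact subsingleton_hom_of_iso (((subcat E hE).trW.Q.commShiftIso n).app X) (Iso.refl _) h3
  · -- extensions
    intro T hT h1 h3
    refine ⟨isDb_ext T hT h1.1 h3.1, fun P hP => (hvan _ P).2 ?_⟩
    have hmap := (subcat E hE).trW.Q.map_distinguished T hT
    constructor
    intro f g
    suffices h : ∀ f : (subcat E hE).trW.Q.obj T.obj₂ ⟶ (subcat E hE).trW.Q.obj P, f = 0 by
      rw [h f, h g]
    intro f
    obtain ⟨k, hk⟩ := Pretriangulated.Triangle.yoneda_exact₂ _ hmap f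
      (((hvan T.obj₁ P).1 (h1.2 P hP)).elim _ _)
    have hk0 : k = 0 := ((hvan T.obj₃ P).1 (h3.2 P hP)).elim _ _
    rw [hk, hk0]; exact comp_zero
  · -- retracts
    intro X Y s r hsr hX
    refine ⟨isDb_retract s r hsr hX.1, fun P hP => (hvan Y P).2 ?_⟩
    have h2 := (hvan X P).1 (hX.2 P hP)
    have hid : (subcat E hE).trW.Q.map s ≫ (subcat E hE).trW.Q.map r = 𝟙 _ := by
      rw [← CategoryTheory.Functor.map_comp, hsr, CategoryTheory.Functor.map_id]
    constructor
    intro f g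
    calc f = ((subcat E hE).trW.Q.map s ≫ (subcat E hE).trW.Q.map r) ≫ f := by
          rw [hid, Category.id_comp]
      _ = (subcat E hE).trW.Q.map s ≫ ((subcat E hE).trW.Q.map r ≫ f) := by
          rw [Category.assoc]
      _ = (subcat E hE).trW.Q.map s ≫ ((subcat E hE).trW.Q.map r ≫ g) := by
          rw [h2.elim ((subcat E hE).trW.Q.map r ≫ f) ((subcat E hE).trW.Q.map r ≫ g)]
      _ = g := by rw [← Category.assoc, hid, Category.id_comp]
  · -- the intersection
    apply Set.Subset.antisymm
    · rintro T ⟨hTt, hTp⟩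
      have h0 : Subsingleton ((subcat E hE).trW.Q.obj T ⟶ (subcat E hE).trW.Q.obj T) :=
        (hvan T T).1 (hTt.2 T hTp)
      have hid : (subcat E hE).trW.Q.map (𝟙 T) = (subcat E hE).trW.Q.map (0 : T ⟶ T) := by
        rw [CategoryTheory.Functor.map_id, Functor.map_zero]
        exact h0.elim _ _
      obtain ⟨Z, s, hs, fac⟩ :=
        (MorphismProperty.map_eq_iff_postcomp (subcat E hE).trW.Q (subcat E hE).trW _ _).1 hid
      have hs0 : s = 0 := by simpa using fac
      rw [hs0] at hs
      obtain ⟨Z', g, h', hdist, hmem⟩ := hs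
      obtain ⟨k, hk⟩ := Pretriangulated.Triangle.coyoneda_exact₃ _
        (rot_of_distTriang _ hdist) (𝟙 (T⟦(1 : ℤ)⟧)) (by
          show 𝟙 _ ≫ (-((shiftFunctor (D R) (1 : ℤ)).map (0 : T ⟶ Z))) = 0
          rw [Category.id_comp, Functor.map_zero, neg_zero])
      have hTshift : T⟦(1 : ℤ)⟧ ∈ E := hE.2 k h' hk.symm hmem
      have hneg : (T⟦(1 : ℤ)⟧)⟦(-1 : ℤ)⟧ ∈ E := hE.1.2.2.1 _ (-1) hTshift
      exact hE.1.2.1 ((shiftEquiv (D R) (1 : ℤ)).unitIso.app T).symm hneg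
    · intro T hT
      exact ⟨hsub hT, hEp hT⟩
end ProxyPaper
end
end

section
/- Let R be a commutative noetherian ring and X an object of D^b(R). Let x₁,…,xₙ generate the annihilator of the R-module End_{D^b(R)}(X), and let K be the Koszul complex on x₁,…,xₙ. Then K ⊗^L_R X is isomorphic in D^b(R) to the direct sum ⊕_{i=0}^{n} (X[i])^{⊕ C(n,i)}, where C(n,i) is the binomial coefficient. -/
open CategoryTheory Limits Pretriangulated ZeroObject

noncomputable section

namespace ProxyPaper

variable {R : Type} [CommRing R]

/-- Multiplication by `x` as an endomorphism of a complex of `R`-modules. -/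
def smulEndo (C : CochainComplex (ModuleCat.{0} R) ℤ) (x : R) : C ⟶ C where
  f i := ModuleCat.ofHom (LinearMap.lsmul R (C.X i) x)
  comm' i j _ := by
    ext m
    change (C.d i j) (x • m) = x • (C.d i j) m
    first
      | exact map_smul (C.d i j).hom x m
      | simp

/-- `koszulOn C [x₁, …, xₙ]` is the Koszul complex `K(x₁, …, xₙ) ⊗ C`, realized as an
iterated mapping cone of multiplication maps; for `C = R` this is the Koszul complex. -/
def koszulOn (C : CochainComplex (ModuleCat.{0} R) ℤ) : List R → CochainComplex (ModuleCat.{0} R) ℤ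
  | [] => C
  | x :: l => CochainComplex.mappingCone (smulEndo (koszulOn C l) x)

/-- The Koszul complex of a list of elements, as an object of the derived category. -/
def koszul (R : Type) [CommRing R] (l : List R) : D R :=
  DerivedCategory.Q.obj
    (koszulOn ((CochainComplex.singleFunctor (ModuleCat.{0} R) 0).obj (ModuleCat.of R R)) l)
instance {R : Type} [CommRing R] :
    HasFiniteBiproducts (CochainComplex (ModuleCat.{0} R) ℤ) :=
  HasFiniteBiproducts.of_hasFiniteProducts
/-! ## generalities on biproducts -/

section Biprod

attribute [local instance] hasBinaryBiproducts_of_finite_biproducts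

variable {A : Type*} [Category A] [Preadditive A] [HasFiniteBiproducts A]
variable {J K : Type} [Fintype J] [Fintype K]

def biprodSumIso (f : J → A) (g : K → A) : (⨁ Sum.elim f g) ≅ (⨁ f) ⊞ (⨁ g) where
  hom := biproduct.desc fun s => Sum.rec (motive := fun s => Sum.elim f g s ⟶ (⨁ f) ⊞ (⨁ g))
    (fun j => biproduct.ι f j ≫ biprod.inl) (fun k => biproduct.ι g k ≫ biprod.inr) s
  inv := biprod.desc (biproduct.desc fun j => biproduct.ι (Sum.elim f g) (Sum.inl j))
    (biproduct.desc fun k => biproduct.ι (Sum.elim f g) (Sum.inr k))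
  hom_inv_id := by
    apply biproduct.hom_ext'
    intro s
    simp only [biproduct.ι_desc_assoc, Category.comp_id]
    rcases s with j | k <;> simp <;> exact biproduct.ι_desc _ _
  inv_hom_id := by
    apply biprod.hom_ext' <;> apply biproduct.hom_ext' <;> intro j <;>
      simp only [biprod.inl_desc_assoc, biprod.inr_desc_assoc, Category.comp_id]
    · exact (biproduct.ι_desc_assoc (f := f) (fun j => biproduct.ι (Sum.elim f g) (Sum.inl j)) j _).trans
        (biproduct.ι_desc _ _)
    · exact (biproduct.ι_desc_assoc (f := g) (fun j => biproduct.ι (Sum.elim f g) (Sum.inr j)) j _).trans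
        (biproduct.ι_desc _ _)

def biproductUniqueIso {J : Type} [Unique J] (f : J → A) [HasBiproduct f] :
    (⨁ f) ≅ f default where
  hom := biproduct.π f default
  inv := biproduct.ι f default
  hom_inv_id := by
    apply biproduct.hom_ext'
    intro j
    obtain rfl : j = default := Unique.eq_default j
    simp
  inv_hom_id := by simp

end Biprod

/-! ## the index types and combinatorial equivalence -/

abbrev Idx (n : ℕ) : Type := Σ i : Fin (n + 1), Fin (n.choose i.1)

lemma Idx.val_inj {m : ℕ} {a b : Idx m} (h1 : a.1.1 = b.1.1) (h2 : (a.2 : ℕ) = (b.2 : ℕ)) :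
    a = b := by
  obtain ⟨i, k⟩ := a
  obtain ⟨i', k'⟩ := b
  obtain rfl : i = i' := Fin.ext h1
  obtain rfl : k = k' := Fin.ext h2
  rfl

lemma card_Idx (n : ℕ) : Fintype.card (Idx n) = 2 ^ n := by
  rw [Fintype.card_sigma]
  simp only [Fintype.card_fin]
  rw [Fin.sum_univ_eq_sum_range (fun i => n.choose i)]
  exact Nat.sum_range_choose n

def idxFun (n : ℕ) : Idx n ⊕ Idx n → Idx (n + 1)
  | Sum.inl ⟨i, k⟩ =>
      ⟨i.castSucc, ⟨k.1, lt_of_lt_of_le k.2 (Nat.choose_le_choose _ (Nat.le_succ n))⟩⟩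
  | Sum.inr ⟨i, k⟩ =>
      ⟨i.succ, ⟨n.choose (i.1 + 1) + k.1, by
        have hk := k.2
        have h := Nat.choose_succ_succ (n) (i.1)
        simp only [Fin.val_succ, Nat.succ_eq_add_one] at *
        omega⟩⟩

lemma idxFun_injective (n : ℕ) : Function.Injective (idxFun n) := by
  rintro (⟨i, k⟩ | ⟨i, k⟩) (⟨i', k'⟩ | ⟨i', k'⟩) h <;>
    have h1 := congrArg (fun t : Idx (n + 1) => t.1.1) h <;>
    have h2 := congrArg (fun t : Idx (n + 1) => (t.2 : ℕ)) h <;>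
    simp only [idxFun, Fin.val_succ, Fin.coe_castSucc] at h1 h2
  · obtain rfl : i = i' := Fin.ext h1
    obtain rfl : k = k' := Fin.ext h2
    rfl
  · exfalso
    have hk := k.2
    have hc := congrArg (n.choose) h1
    omega
  · exfalso
    have hk' := k'.2
    have hc := congrArg (n.choose) h1
    omega
  · obtain rfl : i = i' := Fin.ext (by omega)
    obtain rfl : k = k' := Fin.ext (by omega)
    rfl

def idxEquiv (n : ℕ) : (Idx n ⊕ Idx n) ≃ Idx (n + 1) :=
  Equiv.ofBijective (idxFun n)
    ((Fintype.bijective_iff_injective_and_card _).2 ⟨idxFun_injective n, by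
      rw [Fintype.card_sum, card_Idx, card_Idx]
      ring⟩)

/-! ## the target biproducts -/

variable (C : CochainComplex (ModuleCat.{0} R) ℤ)

def Bn (n : ℕ) : CochainComplex (ModuleCat.{0} R) ℤ :=
  ⨁ fun j : Idx n => (C⟦(j.1.1 : ℤ)⟧ : CochainComplex (ModuleCat.{0} R) ℤ)

attribute [local instance] hasBinaryBiproducts_of_finite_biproducts

def shiftBnIso (n : ℕ) :
    ((Bn C n)⟦(1 : ℤ)⟧ : CochainComplex (ModuleCat.{0} R) ℤ) ≅
      ⨁ fun j : Idx n => (C⟦(j.1.1 : ℤ) + 1⟧ : CochainComplex (ModuleCat.{0} R) ℤ) :=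
  (Functor.mapBiproduct (shiftFunctor (CochainComplex (ModuleCat.{0} R) ℤ) (1 : ℤ))
    (fun j : Idx n => (C⟦(j.1.1 : ℤ)⟧ : CochainComplex (ModuleCat.{0} R) ℤ))) ≪≫
    biproduct.mapIso (fun j =>
      ((shiftFunctorAdd' (CochainComplex (ModuleCat.{0} R) ℤ) (j.1.1 : ℤ) 1 ((j.1.1 : ℤ) + 1)
        rfl).app C).symm)

def comboIso (n : ℕ) : Bn C (n + 1) ≅ Bn C n ⊞ ((Bn C n)⟦(1 : ℤ)⟧) :=
  ((biproduct.whiskerEquiv (idxEquiv n)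
    (fun s => by
      rcases s with ⟨i, k⟩ | ⟨i, k⟩
      · exact Iso.refl _
      · exact eqToIso (congrArg (fun z => ((shiftFunctor _ z).obj C :
          CochainComplex (ModuleCat.{0} R) ℤ)) (by
            simp only [idxEquiv, Equiv.ofBijective, Equiv.coe_fn_mk, idxFun, Fin.val_succ]
            push_cast
            ring)))).symm ≪≫
    biprodSumIso _ _ ≪≫ biprod.mapIso (Iso.refl _) (shiftBnIso C n).symm)

/-! ## multiplication as a natural transformation, descended to the derived category -/

lemma smulEndo_natural {A B : CochainComplex (ModuleCat.{0} R) ℤ} (f : A ⟶ B) (x : R) :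
    smulEndo A x ≫ f = f ≫ smulEndo B x := by
  ext i m
  change (f.f i) (x • m) = x • (f.f i) m
  exact map_smul (f.f i).hom x m

def smulNat (x : R) : 𝟭 (CochainComplex (ModuleCat.{0} R) ℤ) ⟶ 𝟭 _ where
  app A := smulEndo A x
  naturality _ _ f := (smulEndo_natural f x).symm

def smulNatD (x : R) : 𝟭 (D R) ⟶ 𝟭 (D R) :=
  Localization.liftNatTrans DerivedCategory.Q (HomologicalComplex.quasiIso _ _)
    (DerivedCategory.Q ⋙ 𝟭 _) (DerivedCategory.Q ⋙ 𝟭 _) (𝟭 _) (𝟭 _)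
    (Functor.whiskerRight (smulNat x) DerivedCategory.Q)

lemma smulNatD_app (x : R) (A : CochainComplex (ModuleCat.{0} R) ℤ) :
    (smulNatD x).app (DerivedCategory.Q.obj A) = DerivedCategory.Q.map (smulEndo A x) := by
  simp [smulNatD, smulNat]

/-- transfer of the vanishing of multiplication along an isomorphism in `D R` -/
lemma kills_trans {x : R} {A B : CochainComplex (ModuleCat.{0} R) ℤ}
    (e : DerivedCategory.Q.obj A ≅ DerivedCategory.Q.obj B)
    (h : DerivedCategory.Q.map (smulEndo A x) = 0) :
    DerivedCategory.Q.map (smulEndo B x) = 0 := by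
  rw [← smulNatD_app] at h ⊢
  have nat := (smulNatD x).naturality e.hom
  simp only [Functor.id_map] at nat
  calc (smulNatD x).app (DerivedCategory.Q.obj B)
      = e.inv ≫ e.hom ≫ (smulNatD x).app (DerivedCategory.Q.obj B) := by simp
    _ = e.inv ≫ (smulNatD x).app (DerivedCategory.Q.obj A) ≫ e.hom := by rw [nat]
    _ = 0 := by rw [h]; simp

lemma kills_shift {x : R} {A : CochainComplex (ModuleCat.{0} R) ℤ} (n : ℤ)
    (h : DerivedCategory.Q.map (smulEndo A x) = 0) :
    DerivedCategory.Q.map (smulEndo ((A⟦n⟧ : CochainComplex (ModuleCat.{0} R) ℤ)) x) = 0 := by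
  have : smulEndo ((A⟦n⟧ : CochainComplex (ModuleCat.{0} R) ℤ)) x
      = (smulEndo A x)⟦n⟧' := rfl
  rw [this, ← cancel_mono ((DerivedCategory.Q.commShiftIso n).hom.app A)]
  have nat := (DerivedCategory.Q.commShiftIso n).hom.naturality (smulEndo A x)
  dsimp at nat ⊢
  rw [nat, h]
  simp

lemma kills_biproduct {x : R} {J : Type} [Fintype J]
    (F : J → CochainComplex (ModuleCat.{0} R) ℤ)
    (h : ∀ j, DerivedCategory.Q.map (smulEndo (F j) x) = 0) :
    DerivedCategory.Q.map (smulEndo (⨁ F) x) = 0 := by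
  have he : ∀ j, biproduct.ι _ j ≫ (Functor.mapBiproduct DerivedCategory.Q F).inv
      = DerivedCategory.Q.map (biproduct.ι F j) := by
    intro j
    rw [Functor.mapBiproduct_inv]
    simp
  have key : (Functor.mapBiproduct DerivedCategory.Q F).inv ≫
      DerivedCategory.Q.map (smulEndo (⨁ F) x) = 0 := by
    apply biproduct.hom_ext'
    intro j
    rw [reassoc_of% (he j), ← DerivedCategory.Q.map_comp,
      ← smulEndo_natural (biproduct.ι F j) x, DerivedCategory.Q.map_comp, h j]
    simp
  rw [← Iso.hom_inv_id_assoc (Functor.mapBiproduct DerivedCategory.Q F)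
    (DerivedCategory.Q.map (smulEndo (⨁ F) x)), key]
  exact comp_zero

lemma kills_Bn {x : R} (h : DerivedCategory.Q.map (smulEndo C x) = 0) (n : ℕ) :
    DerivedCategory.Q.map (smulEndo (Bn C n) x) = 0 :=
  kills_biproduct _ (fun j => kills_shift _ h)

/-! ## splitting of a distinguished triangle with zero first map -/

lemma split {A : Type*} [Category A] [Preadditive A] [HasZeroObject A]
    [HasShift A ℤ] [∀ n : ℤ, (shiftFunctor A n).Additive] [Pretriangulated A]
    (T : Triangle A) (hT : T ∈ distTriang A) (h0 : T.mor₁ = 0) :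
    Nonempty (T.obj₃ ≅ T.obj₂ ⊞ T.obj₁⟦(1:ℤ)⟧) := by
  have hT' := inv_rot_of_distTriang _
    (binaryBiproductTriangle_distinguished T.obj₂ (T.obj₁⟦(1:ℤ)⟧))
  have e := isoTriangleOfIso₁₂ T _ hT hT'
    ((shiftEquiv A (1:ℤ)).unitIso.app T.obj₁) (Iso.refl _) (by
      dsimp [binaryBiproductTriangle]
      rw [h0]
      refine zero_comp.trans (comp_zero.symm.trans (congrArg _ ?_).symm)
      show -(shiftFunctor A (-1)).map (0 : T.obj₁⟦(1:ℤ)⟧ ⟶ T.obj₂⟦(1:ℤ)⟧) ≫ _ = 0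
      rw [Functor.map_zero]
      have aux : ∀ {X Y Z : A} (g : Y ⟶ Z), -((0 : X ⟶ Y) ≫ g) = 0 := by intros; simp
      exact aux _)
  exact ⟨Triangle.π₃.mapIso e⟩

lemma coneSplit {Y : CochainComplex (ModuleCat.{0} R) ℤ} (φ : Y ⟶ Y)
    (h : DerivedCategory.Q.map φ = 0) :
    Nonempty (DerivedCategory.Q.obj (CochainComplex.mappingCone φ) ≅
      DerivedCategory.Q.obj Y ⊞ ((DerivedCategory.Q.obj Y)⟦(1:ℤ)⟧)) := by
  obtain ⟨e⟩ := split (DerivedCategory.Qh.mapTriangle.obj (CochainComplex.mappingCone.triangleh φ))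
    (DerivedCategory.Qh.map_distinguished _
      (HomotopyCategory.mappingCone_triangleh_distinguished φ)) h
  exact ⟨e⟩

/-! ## koszulOn and the main induction -/

instance uniqueIdxZero : Unique (Idx 0) where
  default := ⟨0, ⟨0, by simp⟩⟩
  uniq := by
    rintro ⟨i, k⟩
    obtain rfl : i = 0 := Fin.ext (by have := i.isLt; omega)
    have hk := k.isLt
    simp only [Fin.val_zero, Nat.choose_self] at hk
    apply Idx.val_inj
    · rfl
    · simpa using Nat.lt_one_iff.1 hk

def baseIso : C ≅ Bn C 0 :=
  ((shiftFunctorZero (CochainComplex (ModuleCat.{0} R) ℤ) ℤ).app C).symm ≪≫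
    (biproductUniqueIso (fun j : Idx 0 =>
      (C⟦(j.1.1 : ℤ)⟧ : CochainComplex (ModuleCat.{0} R) ℤ))).symm

attribute [local instance] preservesBinaryBiproducts_of_preservesBiproducts

lemma main_induction (m : List R)
    (hx : ∀ y ∈ m, DerivedCategory.Q.map (smulEndo C y) = 0) :
    Nonempty (DerivedCategory.Q.obj (koszulOn C m) ≅ DerivedCategory.Q.obj (Bn C m.length)) := by
  induction m with
  | nil => exact ⟨DerivedCategory.Q.mapIso (baseIso C)⟩
  | cons x m ih =>
      obtain ⟨e⟩ := ih (fun y hy => hx y (List.mem_cons_of_mem x hy))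
      have hB : DerivedCategory.Q.map (smulEndo (Bn C m.length) x) = 0 :=
        kills_Bn C (hx x List.mem_cons_self) m.length
      have hY : DerivedCategory.Q.map (smulEndo (koszulOn C m) x) = 0 :=
        kills_trans e.symm hB
      obtain ⟨s⟩ := coneSplit (smulEndo (koszulOn C m) x) hY
      refine ⟨s ≪≫ biprod.mapIso e ((shiftFunctor (D R) (1:ℤ)).mapIso e) ≪≫
        biprod.mapIso (Iso.refl _) ((DerivedCategory.Q.commShiftIso (1:ℤ)).app
          (Bn C m.length)).symm ≪≫
        (DerivedCategory.Q.mapBiprod _ _).symm ≪≫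
        DerivedCategory.Q.mapIso (comboIso C m.length).symm⟩


/-- Let `X ∈ D^b(R)` (represented by a complex `C`), let `x₁, …, xₙ`
generate the annihilator of the `R`-module `End_{D^b(R)}(X)` (i.e. `x • 𝟙 X = 0` exactly
for `x` in the span), and let `K` be the Koszul complex on `x₁, …, xₙ`. Then
`K ⊗^L_R X ≅ ⊕_{i=0}^{n} (X[i])^{⊕ C(n,i)}` in `D^b(R)`. Here `K ⊗^L_R X` is computed as
the iterated mapping cone `koszulOn C l`. -/
theorem stmt19 (R : Type) [CommRing R] [IsNoetherianRing R]
    (C : CochainComplex (ModuleCat.{0} R) ℤ) (hC : IsDb (DerivedCategory.Q.obj C))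
    (l : List R)
    (hann : ∀ x : R,
      DerivedCategory.Q.map (smulEndo C x) = 0 ↔ x ∈ Ideal.span {y : R | y ∈ l}) :
    Nonempty (DerivedCategory.Q.obj (koszulOn C l) ≅
      DerivedCategory.Q.obj
        (⨁ fun j : (Σ i : Fin (l.length + 1), Fin (l.length.choose i.1)) =>
          (C⟦(j.1.1 : ℤ)⟧ : CochainComplex (ModuleCat.{0} R) ℤ))) := by
  exact main_induction C l (fun y hy => (hann y).2 (Ideal.subset_span hy))
end ProxyPaper
end
end
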